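/- Let M = AW be a stable nonnegative matrix factorization. Then for every column index i, the support of the column Wᵢ corresponds to a linearly independent set of columns of A. -/

import Mathlib

open scoped Classical

/-- A subset `S` of column indices of `A` is admissible for a vector `v` if `v` lies in
the conical hull of the columns of `A` indexed by `S`. -/
def Admissible {m r : ℕ} (A : Matrix (Fin m) (Fin r) ℝ) (v : Fin m → ℝ)
    (S : Finset (Fin r)) : Prop :=
  ∃ α : Fin r → ℝ, (∀ k, 0 ≤ α k) ∧ (∀ k, k ∉ S → α k = 0) ∧
    ∀ j, v j = ∑ k : Fin r, α k * A j k

/-- Encoding of a subset of `Fin r` giving larger weight to smaller indices, so that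
among subsets of equal cardinality, lexicographically earlier subsets get larger codes. -/
def subsetCode {r : ℕ} (S : Finset (Fin r)) : ℕ := ∑ i ∈ S, 2 ^ (r - 1 - (i : ℕ))

/-- The order on subsets of `[r]`: smaller cardinality first, ties broken
lexicographically (as increasing sequences of indices). -/
def SubsetLt {r : ℕ} (S T : Finset (Fin r)) : Prop :=
  S.card < T.card ∨ (S.card = T.card ∧ subsetCode T < subsetCode S)

/-- `S` is the (lexicographically) first admissible subset for `v`. -/
def IsFirstAdmissible {m r : ℕ} (A : Matrix (Fin m) (Fin r) ℝ) (v : Fin m → ℝ)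
    (S : Finset (Fin r)) : Prop :=
  Admissible A v S ∧ ∀ T, Admissible A v T → T ≠ S → SubsetLt S T

/-- A nonnegative matrix factorization `M = A * W` is stable if every column of `W` is
supported in the first admissible subset of columns of `A` for the corresponding column
of `M`, and every row of `A` is supported in the first admissible subset of rows of `W`
for the corresponding row of `M`. -/
def Stable {m n r : ℕ} (M : Matrix (Fin m) (Fin n) ℝ)
    (A : Matrix (Fin m) (Fin r) ℝ) (W : Matrix (Fin r) (Fin n) ℝ) : Prop :=
  (∀ i : Fin n, ∃ S : Finset (Fin r),
      IsFirstAdmissible A (fun j => M j i) S ∧ ∀ k, W k i ≠ 0 → k ∈ S) ∧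
  (∀ j : Fin m, ∃ T : Finset (Fin r),
      IsFirstAdmissible W.transpose (fun i => M j i) T ∧ ∀ k, A j k ≠ 0 → k ∈ T)

/-- in a stable nonnegative factorization M = A * W, the support of each
column Wᵢ corresponds to a linearly independent set of columns of A. -/
theorem stmt_6 {m n r : ℕ} (M : Matrix (Fin m) (Fin n) ℝ)
    (A : Matrix (Fin m) (Fin r) ℝ) (W : Matrix (Fin r) (Fin n) ℝ)
    (hA : ∀ i k, 0 ≤ A i k) (hW : ∀ k j, 0 ≤ W k j) (hfac : M = A * W)
    (hstable : Stable M A W) (i : Fin n) :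
    LinearIndependent ℝ (fun k : {k : Fin r // W k i ≠ 0} => fun j : Fin m => A j k.1) := by

  classical
  obtain ⟨hcol, _⟩ := hstable
  obtain ⟨S, ⟨hSadm, hSmin⟩, hsupp⟩ := hcol i
  set supp : Finset (Fin r) := Finset.univ.filter (fun k => W k i ≠ 0) with hsuppdef
  have hmemsupp : ∀ k, k ∈ supp ↔ W k i ≠ 0 := by
    intro k; simp [hsuppdef]
  have hMA : ∀ j, M j i = ∑ k : Fin r, W k i * A j k := by
    intro j; rw [hfac]
    simp [Matrix.mul_apply, mul_comm]
  have hsuppAdm : Admissible A (fun j => M j i) supp :=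
    ⟨fun k => W k i, fun k => hW k i,
      fun k hk => by simpa [hmemsupp k] using hk, fun j => hMA j⟩
  have hsuppS : supp ⊆ S := fun k hk => hsupp k ((hmemsupp k).1 hk)
  have hsuppeq : supp = S := by
    by_contra h
    rcases hSmin supp hsuppAdm h with h1 | ⟨h1, _⟩
    · exact absurd (Finset.card_le_card hsuppS) (by omega)
    · exact h (Finset.eq_of_subset_of_card_le hsuppS (le_of_eq h1))
  -- main step: any dependence relation with a positive coefficient, supported on the
  -- support of the column, gives a contradiction with minimality of S
  have main : ∀ c : Fin r → ℝ, (∀ k, W k i = 0 → c k = 0) →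
      (∀ j, ∑ k : Fin r, c k * A j k = 0) → (∃ k, 0 < c k) → False := by
    rintro c hc0 hcsum ⟨k₁, hk₁⟩
    have hk₁supp : k₁ ∈ supp := by
      rw [hmemsupp]
      intro h; rw [hc0 k₁ h] at hk₁; exact lt_irrefl 0 hk₁
    set P : Finset (Fin r) := supp.filter (fun k => 0 < c k) with hPdef
    have hPne : P.Nonempty := ⟨k₁, by simp [hPdef, hk₁supp, hk₁]⟩
    obtain ⟨k₀, hk₀P, hk₀min⟩ := P.exists_min_image (fun k => W k i / c k) hPne
    have hk₀supp : k₀ ∈ supp := (Finset.mem_filter.1 hk₀P).1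
    have hck₀ : 0 < c k₀ := (Finset.mem_filter.1 hk₀P).2
    set t : ℝ := W k₀ i / c k₀ with htdef
    have ht0 : 0 ≤ t := div_nonneg (hW k₀ i) (le_of_lt hck₀)
    set α' : Fin r → ℝ := fun k => W k i - t * c k with hα'def
    have hα'nonneg : ∀ k, 0 ≤ α' k := by
      intro k
      by_cases hck : 0 < c k
      · have hkP : k ∈ P := by
          refine Finset.mem_filter.2 ⟨?_, hck⟩
          rw [hmemsupp]
          intro h; rw [hc0 k h] at hck; exact lt_irrefl 0 hck
        have h1 := hk₀min k hkP
        have h2 : t * c k ≤ W k i := (le_div_iff₀ hck).1 h1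
        simp only [hα'def]; linarith
      · push_neg at hck
        have h1 : t * c k ≤ 0 := mul_nonpos_of_nonneg_of_nonpos ht0 hck
        have h2 := hW k i
        simp only [hα'def]; linarith
    have hα'k₀ : α' k₀ = 0 := by
      simp only [hα'def, htdef]
      field_simp
      ring
    have hα'supp : ∀ k, k ∉ supp.erase k₀ → α' k = 0 := by
      intro k hk
      by_cases hkk : k = k₀
      · rw [hkk]; exact hα'k₀
      · have hknot : k ∉ supp := by
          intro hmem
          exact hk (Finset.mem_erase.2 ⟨hkk, hmem⟩)
        have hw : W k i = 0 := by
          by_contra hw; exact hknot ((hmemsupp k).2 hw)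
        simp only [hα'def, hw, hc0 k hw, mul_zero, sub_zero]
    have hrep : ∀ j, M j i = ∑ k : Fin r, α' k * A j k := by
      intro j
      have : ∑ k : Fin r, α' k * A j k
          = (∑ k : Fin r, W k i * A j k) - t * ∑ k : Fin r, c k * A j k := by
        rw [Finset.mul_sum, ← Finset.sum_sub_distrib]
        congr 1; funext k; simp only [hα'def]; ring
      rw [this, hcsum j, hMA j]; ring
    have hTadm : Admissible A (fun j => M j i) (supp.erase k₀) :=
      ⟨α', hα'nonneg, hα'supp, hrep⟩
    have hTne : supp.erase k₀ ≠ S := by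
      intro h
      have h2 : k₀ ∈ supp.erase k₀ := by rw [h, ← hsuppeq]; exact hk₀supp
      exact Finset.notMem_erase k₀ supp h2
    have hcard : (supp.erase k₀).card < S.card := by
      rw [← hsuppeq, Finset.card_erase_of_mem hk₀supp]
      have : 0 < supp.card := Finset.card_pos.2 ⟨k₀, hk₀supp⟩
      omega
    rcases hSmin _ hTadm hTne with h1 | ⟨h1, _⟩ <;> omega
  -- now the linear independence
  rw [Fintype.linearIndependent_iff]
  intro g hg
  by_contra hne
  push_neg at hne
  obtain ⟨k₂, hk₂⟩ := hne
  set c : Fin r → ℝ := fun k => if h : W k i ≠ 0 then g ⟨k, h⟩ else 0 with hcdef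
  have hc0 : ∀ k, W k i = 0 → c k = 0 := by
    intro k hk; simp [hcdef, hk]
  have hcsum : ∀ j, ∑ k : Fin r, c k * A j k = 0 := by
    intro j
    have h1 : ∑ k : Fin r, c k * A j k = ∑ k ∈ supp, c k * A j k := by
      refine (Finset.sum_subset (Finset.subset_univ _) ?_).symm
      intro k _ hk
      rw [hc0 k (by_contra fun h => hk ((hmemsupp k).2 h))]
      ring
    have h2 : ∑ k ∈ supp, c k * A j k
        = ∑ k : {k : Fin r // W k i ≠ 0}, c k.1 * A j k.1 :=
      Finset.sum_subtype _ (fun k => hmemsupp k) _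
    have h3 : ∀ k : {k : Fin r // W k i ≠ 0}, c k.1 = g k := by
      rintro ⟨k, hk⟩; simp [hcdef, hk]
    have h4 := congrFun hg j
    simp only [Finset.sum_apply, Pi.smul_apply, smul_eq_mul, Pi.zero_apply] at h4
    rw [h1, h2]
    calc ∑ k : {k : Fin r // W k i ≠ 0}, c k.1 * A j k.1
        = ∑ k : {k : Fin r // W k i ≠ 0}, g k * A j k.1 := by
          refine Finset.sum_congr rfl fun k _ => ?_; rw [h3 k]
      _ = 0 := h4
  have hck₂ : c k₂.1 = g k₂ := by
    obtain ⟨k, hk⟩ := k₂; simp [hcdef, hk]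
  rcases lt_or_gt_of_ne hk₂ with hlt | hgt
  · exact main (fun k => -c k) (fun k hk => by show -c k = 0; rw [hc0 k hk]; ring)
      (fun j => by
        have := hcsum j
        calc ∑ k : Fin r, -c k * A j k = -∑ k : Fin r, c k * A j k := by
              rw [← Finset.sum_neg_distrib]; congr 1; funext k; ring
          _ = 0 := by rw [this]; ring)
      ⟨k₂.1, by show 0 < -c k₂.1; rw [hck₂]; linarith⟩
  · exact main c hc0 hcsum ⟨k₂.1, by rw [hck₂]; linarith⟩
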